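/- Let X be a reflexive Banach space with property (m_p), p > 1, and K a nonzero compact operator on X. Then every weak cluster point of every maximizing sequence for K has norm 1; that is, the minimal weak maximizing limit of K equals 1. -/

import Mathlib

open Filter Topology

/-- Weak convergence of a sequence in a normed space. -/
def WeakTendsto {X : Type*} [NormedAddCommGroup X] [NormedSpace ℝ X]
    (x : ℕ → X) (x₀ : X) : Prop :=
  ∀ f : X →L[ℝ] ℝ, Tendsto (fun n => f (x n)) atTop (𝓝 (f x₀))

/-- Property (m_p). -/
def PropertyMp {X : Type*} [NormedAddCommGroup X] [NormedSpace ℝ X] (p : ℝ) : Prop :=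
  ∀ x : ℕ → X, WeakTendsto x 0 → ∀ y : X,
    limsup (fun n => ‖x n + y‖ ^ p) atTop = limsup (fun n => ‖x n‖ ^ p) atTop + ‖y‖ ^ p

/-- A maximizing sequence for a bounded operator: unit vectors with ‖T xₙ‖ → ‖T‖. -/
def MaximizingSeq {X : Type*} [NormedAddCommGroup X] [NormedSpace ℝ X]
    (T : X →L[ℝ] X) (x : ℕ → X) : Prop :=
  (∀ n, ‖x n‖ = 1) ∧ Tendsto (fun n => ‖T (x n)‖) atTop (𝓝 ‖T‖)

/-- Weak cluster point of some maximizing sequence for T. -/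
def WeakClusterPtOfMaximizing {X : Type*} [NormedAddCommGroup X] [NormedSpace ℝ X]
    (T : X →L[ℝ] X) (x₀ : X) : Prop :=
  ∃ x : ℕ → X, MaximizingSeq T x ∧ ∃ φ : ℕ → ℕ, StrictMono φ ∧ WeakTendsto (x ∘ φ) x₀

/-- The essential norm: distance to the compact operators. -/
noncomputable def essNorm {X : Type*} [NormedAddCommGroup X] [NormedSpace ℝ X]
    (T : X →L[ℝ] X) : ℝ :=
  sInf {c : ℝ | ∃ K : X →L[ℝ] X, IsCompactOperator K ∧ c = ‖T - K‖}

theorem stmt14 {X : Type*} [NormedAddCommGroup X] [NormedSpace ℝ X] [CompleteSpace X]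
    (hrefl : Function.Surjective (NormedSpace.inclusionInDoubleDual ℝ X))
    {p : ℝ} (hp : 1 < p) (hmp : PropertyMp (X := X) p)
    (K : X →L[ℝ] X) (hK : IsCompactOperator K) (hK0 : K ≠ 0) :
    ∀ x₀ : X, WeakClusterPtOfMaximizing K x₀ → ‖x₀‖ = 1 := by
  rintro x₀ ⟨x, ⟨hx1, hxK⟩, φ, hφ, hweak⟩
  set y : ℕ → X := x ∘ φ with hy
  have hy1 : ∀ n, ‖y n‖ = 1 := fun n => hx1 (φ n)
  have hyK : Tendsto (fun n => ‖K (y n)‖) atTop (𝓝 ‖K‖) :=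
    hxK.comp hφ.tendsto_atTop
  -- K (y n) → K x₀ in norm
  have hKy : Tendsto (fun n => K (y n)) atTop (𝓝 (K x₀)) := by
    obtain ⟨C, hC, hCsub⟩ :=
      hK.image_closedBall_subset_compact (𝕜₁ := ℝ) (f := (K : X →ₛₗ[RingHom.id ℝ] X)) 1
    have hmem : ∀ n, K (y n) ∈ C := fun n =>
      hCsub ⟨y n, by simp [Metric.mem_closedBall, (hy1 n).le], rfl⟩
    refine tendsto_of_subseq_tendsto fun ns hns => ?_
    obtain ⟨w, _, ms, hms, hmsT⟩ := hC.tendsto_subseq (fun n => hmem (ns n))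
    refine ⟨ms, ?_⟩
    -- w = K x₀ since both are weak limits
    have hwlim : ∀ f : X →L[ℝ] ℝ,
        Tendsto (fun n => f (K (y (ns (ms n))))) atTop (𝓝 (f (K x₀))) := fun f =>
      (hweak (f.comp K)).comp ((hns.comp hms.tendsto_atTop))
    have hweq : w = K x₀ := by
      by_contra hne
      obtain ⟨g, hg1, hgval⟩ := exists_dual_vector ℝ (w - K x₀) (norm_ne_zero_iff.mpr (sub_ne_zero.mpr hne))
      have h1 : Tendsto (fun n => g (K (y (ns (ms n))))) atTop (𝓝 (g w)) :=
        (g.continuous.tendsto w).comp hmsT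
      have h2 := hwlim g
      have : g w = g (K x₀) := tendsto_nhds_unique h1 h2
      have : g (w - K x₀) = 0 := by simp [map_sub, this]
      rw [hgval] at this
      exact hne (by simpa [sub_eq_zero] using norm_sub_eq_zero_iff.mp (by exact_mod_cast this))
    exact hweq ▸ hmsT
  -- hence ‖K x₀‖ = ‖K‖
  have hKx₀ : ‖K x₀‖ = ‖K‖ :=
    tendsto_nhds_unique ((continuous_norm.tendsto _).comp hKy) hyK
  have hKpos : 0 < ‖K‖ := norm_pos_iff.mpr hK0
  -- ‖x₀‖ ≥ 1
  have hge : 1 ≤ ‖x₀‖ := by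
    have h1 : ‖K‖ ≤ ‖K‖ * ‖x₀‖ := hKx₀ ▸ K.le_opNorm x₀
    nlinarith
  -- ‖x₀‖ ≤ 1
  have hle : ‖x₀‖ ≤ 1 := by
    have hx₀ : x₀ ≠ 0 := by intro h; rw [h, norm_zero] at hge; linarith
    obtain ⟨g, hg1, hgval⟩ := exists_dual_vector ℝ x₀ (norm_ne_zero_iff.mpr hx₀)
    have htend : Tendsto (fun n => g (y n)) atTop (𝓝 ‖x₀‖) := by
      have := hweak g
      rw [show g x₀ = ‖x₀‖ by exact_mod_cast hgval] at this
      exact this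
    refine le_of_tendsto htend (Eventually.of_forall fun n => ?_)
    calc g (y n) ≤ ‖g (y n)‖ := le_abs_self _
      _ ≤ ‖g‖ * ‖y n‖ := g.le_opNorm _
      _ = 1 := by rw [hg1, hy1 n, mul_one]
  linarith
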